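/- Let R = (r,…,r) be of length m and S = (s,…,s) of length n, with r, s nonnegative integers, m ≥ s, and n ≥ r. Then rm = sn if and only if there exists an m×n (0,1) matrix with all row sums equal to r and all column sums equal to s. -/

import Mathlib

open Matrix Finset

lemma uniq_rep {n d e c : ℕ} (hd : d < n) (he : e < n)
    (h : (c + d) % n = (c + e) % n) : d = e := by
  have h1 : c + d ≡ c + e [MOD n] := h
  have h2 : d ≡ e [MOD n] := Nat.ModEq.add_left_cancel' c h1
  have := h2
  unfold Nat.ModEq at this
  rwa [Nat.mod_eq_of_lt hd, Nat.mod_eq_of_lt he] at this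

lemma D_spec {n : ℕ} (hn : 0 < n) (c j : ℕ) (hj : j < n) :
    (n + j - c % n) % n < n ∧ (c + (n + j - c % n) % n) % n = j := by
  have hc : c % n < n := Nat.mod_lt _ hn
  refine ⟨Nat.mod_lt _ hn, ?_⟩
  rw [Nat.add_mod_mod]
  have h2 : c + (n + j - c % n) = n * (c / n) + (n + j) := by
    have := Nat.div_add_mod c n; omega
  rw [h2, Nat.mul_add_mod, Nat.add_mod_left, Nat.mod_eq_of_lt hj]

lemma count_res {n : ℕ} (hn : 0 < n) (j : ℕ) (hj : j < n) (s : ℕ) :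
    #{t ∈ range (s * n) | t % n = j} = s := by
  induction s with
  | zero => simp
  | succ s ih =>
    have hmul : (s+1) * n = s * n + n := by ring
    have hsplit : range ((s+1)*n) = range (s*n) ∪ Ico (s*n) ((s+1)*n) := by
      rw [range_eq_Ico, range_eq_Ico]
      exact (Finset.Ico_union_Ico_eq_Ico (Nat.zero_le (s*n)) (show s*n ≤ (s+1)*n by omega)).symm
    have hsing : {t ∈ Ico (s*n) ((s+1)*n) | t % n = j} = {s * n + j} := by
      ext t
      simp only [mem_filter, mem_Ico, mem_singleton]
      constructor
      · rintro ⟨⟨h1, h2⟩, h3⟩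
        obtain ⟨u, hu, rfl⟩ : ∃ u, u < n ∧ t = u + s * n := ⟨t - s*n, by omega, by omega⟩
        rw [Nat.add_mul_mod_self_right, Nat.mod_eq_of_lt hu] at h3
        omega
      · rintro rfl
        refine ⟨⟨by omega, by omega⟩, ?_⟩
        rw [Nat.add_comm, Nat.add_mul_mod_self_right, Nat.mod_eq_of_lt hj]
    have hdisj : Disjoint {t ∈ range (s*n) | t % n = j} {t ∈ Ico (s*n) ((s+1)*n) | t % n = j} :=
      disjoint_filter_filter (by
        rw [range_eq_Ico]; exact Finset.Ico_disjoint_Ico_consecutive 0 (s*n) ((s+1)*n))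
    rw [hsplit, filter_union, card_union_of_disjoint hdisj, ih, hsing, card_singleton]

lemma row_card {n r : ℕ} (hn : 0 < n) (hr : r ≤ n) (c : ℕ) :
    #{j : Fin n | (n + j.val - c % n) % n < r} = r := by
  have key : #(range r) = #{j : Fin n | (n + j.val - c % n) % n < r} := by
    apply Finset.card_nbij (i := fun k => (⟨(c + k) % n, Nat.mod_lt _ hn⟩ : Fin n))
    · intro k hk
      simp only [mem_coe, mem_range] at hk
      simp only [mem_coe, mem_filter, mem_univ, true_and]
      obtain ⟨hDlt, hDeq⟩ := D_spec hn c ((c + k) % n) (Nat.mod_lt _ hn)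
      have : (n + (c + k) % n - c % n) % n = k := uniq_rep hDlt (lt_of_lt_of_le hk hr) hDeq
      rw [this]; exact hk
    · intro k hk k' hk' hEq
      simp only [mem_coe, mem_range] at hk hk'
      have : (c + k) % n = (c + k') % n := congrArg Fin.val hEq
      exact uniq_rep (lt_of_lt_of_le hk hr) (lt_of_lt_of_le hk' hr) this
    · intro j hj
      simp only [mem_coe, mem_filter, mem_univ, true_and] at hj
      obtain ⟨hDlt, hDeq⟩ := D_spec hn c j.val j.isLt
      exact ⟨(n + j.val - c % n) % n, by simpa using hj, Fin.ext hDeq⟩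
  rw [← key, card_range]

lemma div_trick {r a d : ℕ} (hr : 0 < r) (hd : d < r) : (a * r + d) / r = a := by
  rw [Nat.mul_comm, Nat.mul_add_div hr, Nat.div_eq_of_lt hd, Nat.add_zero]

lemma col_card {m n r : ℕ} (hn : 0 < n) (hr' : 0 < r) (hr : r ≤ n) (j : ℕ) (hj : j < n) :
    #{i : Fin m | (n + j - (i.val * r) % n) % n < r} =
    #{t ∈ range (m * r) | t % n = j} := by
  apply Finset.card_nbij (i := fun i => i.val * r + (n + j - (i.val * r) % n) % n)
  · intro i hi
    simp only [mem_coe, mem_filter, mem_univ, true_and] at hi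
    obtain ⟨hDlt, hDeq⟩ := D_spec hn (i.val * r) j hj
    simp only [mem_coe, mem_filter, mem_range]
    refine ⟨?_, hDeq⟩
    have h1 : i.val * r + (n + j - (i.val * r) % n) % n < (i.val + 1) * r := by
      have := i.isLt; nlinarith
    have h2 : (i.val + 1) * r ≤ m * r := Nat.mul_le_mul_right _ i.isLt
    omega
  · intro i hi i' hi' hEq
    simp only [mem_coe, mem_filter, mem_univ, true_and] at hi hi'
    have e1 : (i.val * r + (n + j - (i.val * r) % n) % n) / r = i.val :=
      div_trick hr' hi
    have e2 : (i'.val * r + (n + j - (i'.val * r) % n) % n) / r = i'.val :=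
      div_trick hr' hi'
    have hEq' : i.val * r + (n + j - (i.val * r) % n) % n
        = i'.val * r + (n + j - (i'.val * r) % n) % n := hEq
    apply Fin.ext
    rw [← e1, ← e2, hEq']
  · intro t ht
    simp only [mem_coe, mem_filter, mem_range] at ht
    obtain ⟨htlt, htmod⟩ := ht
    have him : t / r < m := (Nat.div_lt_iff_lt_mul hr').mpr htlt
    have hdm : t / r * r + t % r = t := by rw [Nat.mul_comm]; exact Nat.div_add_mod t r
    have hkr : t % r < r := Nat.mod_lt _ hr'
    obtain ⟨hDlt, hDeq⟩ := D_spec hn ((t / r) * r) j hj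
    have hkeq : (n + j - ((t / r) * r) % n) % n = t % r := by
      apply uniq_rep hDlt (lt_of_lt_of_le hkr hr)
      rw [hDeq]
      rw [show (t / r) * r + t % r = t from hdm, htmod]
    refine ⟨⟨t / r, him⟩, ?_, ?_⟩
    · simp only [mem_coe, mem_filter, mem_univ, true_and]
      rw [hkeq]; exact hkr
    · simp only
      rw [hkeq]; omega

theorem stmt15 (m n r s : ℕ) (hm : 0 < m) (hn : 0 < n) (hs : s ≤ m) (hr : r ≤ n) :
    r * m = s * n ↔
    ∃ A : Matrix (Fin m) (Fin n) ℝ, (∀ i j, A i j = 0 ∨ A i j = 1) ∧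
      (∀ i, ∑ j, A i j = (r : ℝ)) ∧ (∀ j, ∑ i, A i j = (s : ℝ)) := by
  constructor
  · intro h
    refine ⟨fun i j => if (n + j.val - (i.val * r) % n) % n < r then 1 else 0, ?_, ?_, ?_⟩
    · intro i j
      by_cases hc : (n + j.val - (i.val * r) % n) % n < r <;> simp [hc]
    · intro i
      rw [Finset.sum_boole]
      norm_cast
      exact row_card hn hr (i.val * r)
    · intro j
      rw [Finset.sum_boole]
      norm_cast
      rcases Nat.eq_zero_or_pos r with hr0 | hr0
      · have hs0 : s = 0 := by
          rcases Nat.mul_eq_zero.mp (by rw [← h, hr0, zero_mul] : s * n = 0) with h' | h' <;> omega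
        subst hr0; subst hs0
        simp
      · rw [col_card hn hr0 hr j.val j.isLt, show m * r = s * n by rw [Nat.mul_comm]; exact h,
          count_res hn j.val j.isLt s]
  · rintro ⟨A, h01, hrow, hcol⟩
    have h1 : ∑ i, ∑ j, A i j = (m : ℝ) * r := by
      simp [hrow, Finset.sum_const, Finset.card_univ, mul_comm]
    have h2 : ∑ j : Fin n, ∑ i : Fin m, A i j = (n : ℝ) * s := by
      simp [hcol, Finset.sum_const, Finset.card_univ, mul_comm]
    rw [show ∑ i, ∑ j, A i j = ∑ j : Fin n, ∑ i : Fin m, A i j from Finset.sum_comm] at h1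
    have : (r * m : ℝ) = (s * n : ℝ) := by rw [mul_comm] at h1 h2 ⊢; nlinarith [h1, h2]
    exact_mod_cast this
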